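/- Fix n ≥ 1, 1 ≤ i ≤ n, μ ∈ ℝ, and a smooth function ψ of the variables x_{ab} (1 ≤ a ≤ b ≤ n). Define u(t, x) = (1 + x_{ii}t)^{−μ} · ψ(Φ^i_t(x)) on the open set {(t,x) : 1 + x_{ii}t > 0}. Then u(0, x) = ψ(x) and, for all (t,x) in this set, ∂u/∂t(t, x) = −(F_i^{(μ)} u(t, ·))(x); that is, u(t,·) = exp(−tF_i^{(μ)})ψ. Moreover, for the operator F_0 = −z^{−1}∂/∂x_{1n} (z ≠ 0 a fixed real parameter), the function v(t,x) = ψ(Φ^0_t(x)) satisfies v(0,x) = ψ(x) and ∂v/∂t = −F_0 v. -/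

import Mathlib

/-- Index set for the coordinates `x_{ab}`, `1 ≤ a ≤ b ≤ n`, of the big cell
(realized inside `Fin (n+1) × Fin (n+1)` so that it is a finite type). -/
abbrev TriIdx (n : ℕ) : Type :=
  {p : Fin (n + 1) × Fin (n + 1) // 1 ≤ (p.1 : ℕ) ∧ (p.1 : ℕ) ≤ (p.2 : ℕ) ∧ (p.2 : ℕ) ≤ n}

/-- Constructor for elements of `TriIdx n`. -/
def mk' {n : ℕ} (a b : ℕ) (h1 : 1 ≤ a) (h2 : a ≤ b) (h3 : b ≤ n) : TriIdx n :=
  ⟨(⟨a, by omega⟩, ⟨b, by omega⟩), h1, h2, h3⟩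

/-- Partial derivative `∂ψ/∂x_v` at the point `x`. -/
noncomputable def pd {n : ℕ} (ψ : (TriIdx n → ℝ) → ℝ) (v : TriIdx n)
    (x : TriIdx n → ℝ) : ℝ :=
  deriv (fun s : ℝ => ψ (Function.update x v s)) (x v)

/-- The first-order differential operator `F_i^{(μ)}`. -/
noncomputable def Fop (n i : ℕ) (h1 : 1 ≤ i) (h2 : i ≤ n) (μ : ℝ)
    (ψ : (TriIdx n → ℝ) → ℝ) (x : TriIdx n → ℝ) : ℝ :=
  x (mk' i i h1 le_rfl h2) *
      ((∑ j ∈ (Finset.Icc 1 i).attach,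
          x (mk' j.1 i (by have := Finset.mem_Icc.mp j.2; omega)
              (by have := Finset.mem_Icc.mp j.2; omega) h2) *
            pd ψ (mk' j.1 i (by have := Finset.mem_Icc.mp j.2; omega)
              (by have := Finset.mem_Icc.mp j.2; omega) h2) x)
        - ∑ j ∈ (Finset.Icc 1 (i - 1)).attach,
            x (mk' j.1 (i - 1) (by have := Finset.mem_Icc.mp j.2; omega)
                (by have := Finset.mem_Icc.mp j.2; omega) (by omega)) *
              pd ψ (mk' j.1 (i - 1) (by have := Finset.mem_Icc.mp j.2; omega)
                (by have := Finset.mem_Icc.mp j.2; omega) (by omega)) x)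
    - ∑ j ∈ (Finset.Icc (i + 1) n).attach,
        x (mk' i j.1 h1 (by have := Finset.mem_Icc.mp j.2; omega)
            (by have := Finset.mem_Icc.mp j.2; omega)) *
          pd ψ (mk' (i + 1) j.1 (by omega) (by have := Finset.mem_Icc.mp j.2; omega)
            (by have := Finset.mem_Icc.mp j.2; omega)) x
    + ∑ j ∈ (Finset.Icc 1 (i - 1)).attach,
        x (mk' j.1 i (by have := Finset.mem_Icc.mp j.2; omega)
            (by have := Finset.mem_Icc.mp j.2; omega) h2) *
          pd ψ (mk' j.1 (i - 1) (by have := Finset.mem_Icc.mp j.2; omega)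
            (by have := Finset.mem_Icc.mp j.2; omega) (by omega)) x
    + μ * x (mk' i i h1 le_rfl h2) * ψ x

/-- The substitution `Φ^i_t`: it replaces `x_{ki} ↦ x_{ki}/(1+x_{ii}t)` for `k ≤ i`,
`x_{k,i−1} ↦ −(x_{ki} − x_{k,i−1}x_{ii})t + x_{k,i−1}` for `k ≤ i−1`,
`x_{i+1,l} ↦ x_{il}t + x_{i+1,l}` for `l ≥ i+1`, and fixes all other variables. -/
noncomputable def Phi {n : ℕ} (i : ℕ) (h1 : 1 ≤ i) (h2 : i ≤ n) (t : ℝ)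
    (x : TriIdx n → ℝ) : TriIdx n → ℝ := fun v =>
  if (v.1.2 : ℕ) = i then
    x v / (1 + x (mk' i i h1 le_rfl h2) * t)
  else if h : (v.1.2 : ℕ) + 1 = i then
    -(x (mk' (v.1.1 : ℕ) i v.2.1 (by have := v.2.2.1; omega) h2)
        - x v * x (mk' i i h1 le_rfl h2)) * t + x v
  else if h' : (v.1.1 : ℕ) = i + 1 then
    x (mk' i (v.1.2 : ℕ) h1 (by have := v.2.2.1; omega) v.2.2.2) * t + x v
  else x v

/-- The substitution `Φ⁰_t`: it replaces `x_{1n} ↦ x_{1n} + t/z` and fixes all other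
variables. -/
noncomputable def Phi0 {n : ℕ} (hn : 1 ≤ n) (z t : ℝ) (x : TriIdx n → ℝ) :
    TriIdx n → ℝ :=
  Function.update x (mk' 1 n le_rfl hn le_rfl)
    (x (mk' 1 n le_rfl hn le_rfl) + t / z)

namespace Aux
variable {n : ℕ}

lemma ext_iff' {v w : TriIdx n} :
    v = w ↔ ((v.1.1 : ℕ) = (w.1.1 : ℕ) ∧ (v.1.2 : ℕ) = (w.1.2 : ℕ)) := by
  constructor
  · rintro rfl; exact ⟨rfl, rfl⟩
  · rintro ⟨ha, hb⟩
    apply Subtype.ext; apply Prod.ext <;> apply Fin.ext <;> simpa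

lemma eq_mk'_iff {v : TriIdx n} {a b : ℕ} {p1 p2 p3} :
    v = mk' a b p1 p2 p3 ↔ ((v.1.1 : ℕ) = a ∧ (v.1.2 : ℕ) = b) := ext_iff'

/-- indicator vector -/
noncomputable def E (n : ℕ) (a b : ℕ) : TriIdx n → ℝ :=
  if h : 1 ≤ a ∧ a ≤ b ∧ b ≤ n then Pi.single (mk' a b h.1 h.2.1 h.2.2) 1 else 0

lemma E_apply (a b : ℕ) (v : TriIdx n) :
    E n a b v = if (v.1.1 : ℕ) = a ∧ (v.1.2 : ℕ) = b then 1 else 0 := by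
  unfold E
  split_ifs with h h' h'
  · rw [Pi.single_apply, if_pos (eq_mk'_iff.mpr h')]
  · rw [Pi.single_apply, if_neg (fun hc => h' (eq_mk'_iff.mp hc))]
  · exfalso; apply h
    obtain ⟨h2, h3, h4⟩ := v.2
    exact ⟨by omega, by omega, by omega⟩
  · rfl


/-- coordinate access by natural numbers -/
noncomputable def X (x : TriIdx n → ℝ) (a b : ℕ) : ℝ :=
  if h : 1 ≤ a ∧ a ≤ b ∧ b ≤ n then x (mk' a b h.1 h.2.1 h.2.2) else 0

lemma X_eq (x : TriIdx n → ℝ) (a b : ℕ) (p1 : 1 ≤ a) (p2 : a ≤ b) (p3 : b ≤ n) :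
    x (mk' a b p1 p2 p3) = X x a b := by
  rw [X, dif_pos (show 1 ≤ a ∧ a ≤ b ∧ b ≤ n from ⟨p1, p2, p3⟩)]

lemma X_self (x : TriIdx n → ℝ) (v : TriIdx n) : x v = X x (v.1.1 : ℕ) (v.1.2 : ℕ) := by
  obtain ⟨q1, q2, q3⟩ := v.2
  rw [← X_eq x _ _ q1 q2 q3]
  exact congrArg x (eq_mk'_iff.mpr ⟨rfl, rfl⟩)

lemma X_update (x : TriIdx n → ℝ) (w : TriIdx n) (σ : ℝ) (a b : ℕ) :
    X (Function.update x w σ) a b =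
      if (w.1.1 : ℕ) = a ∧ (w.1.2 : ℕ) = b then σ else X x a b := by
  unfold X
  split_ifs with h h' h'
  · rw [Function.update_apply, if_pos (ext_iff'.mpr ⟨h'.1.symm, h'.2.symm⟩)]
  · rw [Function.update_apply, if_neg (fun hc => h' ⟨((ext_iff'.mp hc).1).symm,
      ((ext_iff'.mp hc).2).symm⟩)]
  · exfalso; apply h
    obtain ⟨q1, q2, q3⟩ := w.2
    omega
  · rfl

lemma upd_apply (x : TriIdx n → ℝ) (w v : TriIdx n) (σ : ℝ) :
    Function.update x w σ v =
      if (v.1.1 : ℕ) = (w.1.1 : ℕ) ∧ (v.1.2 : ℕ) = (w.1.2 : ℕ) then σ else x v := by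
  rw [Function.update_apply]
  congr 1
  rw [eq_iff_iff]
  exact ext_iff'


lemma hasDerivAt_update (y : TriIdx n → ℝ) (v : TriIdx n) (σ : ℝ) :
    HasDerivAt (fun s : ℝ => Function.update y v s) (Pi.single v 1) σ := by
  rw [hasDerivAt_pi]
  intro w
  simp only [Function.update_apply, Pi.single_apply]
  split_ifs with h
  · exact hasDerivAt_id' σ
  · exact hasDerivAt_const σ (y w)

lemma pd_eq {ψ : (TriIdx n → ℝ) → ℝ} (hψ : ContDiff ℝ (⊤ : ℕ∞) ψ)
    (v : TriIdx n) (y : TriIdx n → ℝ) :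
    pd ψ v y = fderiv ℝ ψ y (Pi.single v 1) := by
  have h1 : HasDerivAt (fun s : ℝ => ψ (Function.update y v s))
      (fderiv ℝ ψ (Function.update y v (y v)) (Pi.single v 1)) (y v) := by
    exact ((hψ.differentiable (by simp) _).hasFDerivAt).comp_hasDerivAt _
      (hasDerivAt_update y v (y v))
  rw [Function.update_eq_self] at h1
  exact h1.deriv

/-- chain rule -/
lemma chain {ψ : (TriIdx n → ℝ) → ℝ} (hψ : ContDiff ℝ (⊤ : ℕ∞) ψ)
    {g : ℝ → TriIdx n → ℝ} {d : TriIdx n → ℝ} {t : ℝ}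
    (hg : ∀ v, HasDerivAt (fun s => g s v) (d v) t) :
    HasDerivAt (fun s => ψ (g s)) (fderiv ℝ ψ (g t) d) t :=
  ((hψ.differentiable (by simp) (g t)).hasFDerivAt).comp_hasDerivAt t (hasDerivAt_pi.mpr hg)

lemma sum_smul_E_row (s : Finset ℕ) (c : ℕ → ℝ) (b : ℕ) (v : TriIdx n) :
    (∑ j ∈ s, c j • E n j b) v
      = if (v.1.2 : ℕ) = b ∧ (v.1.1 : ℕ) ∈ s then c (v.1.1 : ℕ) else 0 := by
  rw [Finset.sum_apply]
  simp only [Pi.smul_apply, E_apply, smul_eq_mul, mul_ite, mul_one, mul_zero]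
  by_cases hb : (v.1.2 : ℕ) = b
  · simp only [hb, and_true, true_and]
    exact Finset.sum_ite_eq s _ c
  · rw [Finset.sum_eq_zero, if_neg (by tauto)]
    intro j hj
    rw [if_neg (by tauto)]

lemma sum_smul_E_col (s : Finset ℕ) (c : ℕ → ℝ) (a : ℕ) (v : TriIdx n) :
    (∑ l ∈ s, c l • E n a l) v
      = if (v.1.1 : ℕ) = a ∧ (v.1.2 : ℕ) ∈ s then c (v.1.2 : ℕ) else 0 := by
  rw [Finset.sum_apply]
  simp only [Pi.smul_apply, E_apply, smul_eq_mul, mul_ite, mul_one, mul_zero]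
  by_cases ha : (v.1.1 : ℕ) = a
  · simp only [ha, and_true, true_and]
    exact Finset.sum_ite_eq s _ c
  · rw [Finset.sum_eq_zero, if_neg (by tauto)]
    intro j hj
    rw [if_neg (by tauto)]


section Main

variable {n i : ℕ}

lemma Phi_apply (h1 : 1 ≤ i) (h2 : i ≤ n) (t : ℝ) (x : TriIdx n → ℝ) (v : TriIdx n) :
    Phi i h1 h2 t x v =
      if (v.1.2 : ℕ) = i then x v / (1 + X x i i * t)
      else if (v.1.2 : ℕ) + 1 = i then -(X x (v.1.1 : ℕ) i - x v * X x i i) * t + x v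
      else if (v.1.1 : ℕ) = i + 1 then X x i (v.1.2 : ℕ) * t + x v
      else x v := by
  unfold Phi
  split_ifs <;> simp only [X_eq x]

lemma Phi_zero (h1 : 1 ≤ i) (h2 : i ≤ n) (x : TriIdx n → ℝ) : Phi i h1 h2 0 x = x := by
  funext v
  rw [Phi_apply]
  split_ifs <;> ring

lemma Phi_coord_hasDerivAt (h1 : 1 ≤ i) (h2 : i ≤ n) {t : ℝ} (x : TriIdx n → ℝ)
    (hD : 0 < 1 + X x i i * t) (v : TriIdx n) :
    HasDerivAt (fun s => Phi i h1 h2 s x v)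
      (if (v.1.2 : ℕ) = i then -(x v * X x i i) / (1 + X x i i * t) ^ 2
       else if (v.1.2 : ℕ) + 1 = i then -(X x (v.1.1 : ℕ) i - x v * X x i i)
       else if (v.1.1 : ℕ) = i + 1 then X x i (v.1.2 : ℕ)
       else 0) t := by
  simp only [Phi_apply]
  split_ifs with h h' h''
  · have hden : HasDerivAt (fun s : ℝ => 1 + X x i i * s) (X x i i) t := by
      simpa using (((hasDerivAt_id t).const_mul (X x i i)).const_add 1)
    have := (hasDerivAt_const t (x v)).div hden hD.ne'
    refine this.congr_deriv ?_
    ring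
  · simpa using (((hasDerivAt_id t).const_mul (-(X x (v.1.1:ℕ) i - x v * X x i i))).add_const (x v))
  · simpa using (((hasDerivAt_id t).const_mul (X x i (v.1.2:ℕ))).add_const (x v))
  · exact hasDerivAt_const t (x v)


/-- abstract partial derivative in coordinates -/
noncomputable def P (ψ : (TriIdx n → ℝ) → ℝ) (y : TriIdx n → ℝ) (a b : ℕ) : ℝ :=
  fderiv ℝ ψ y (E n a b)

lemma pd_eq_P {ψ : (TriIdx n → ℝ) → ℝ} (hψ : ContDiff ℝ (⊤ : ℕ∞) ψ)
    (y : TriIdx n → ℝ) (a b : ℕ) (p1 : 1 ≤ a) (p2 : a ≤ b) (p3 : b ≤ n) :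
    pd ψ (mk' a b p1 p2 p3) y = P ψ y a b := by
  rw [pd_eq hψ, P, E, dif_pos (show 1 ≤ a ∧ a ≤ b ∧ b ≤ n from ⟨p1, p2, p3⟩)]

lemma dA_sum (h1 : 1 ≤ i) (h2 : i ≤ n) (x : TriIdx n → ℝ) (t : ℝ) :
    (fun v : TriIdx n =>
      if (v.1.2 : ℕ) = i then -(x v * X x i i) / (1 + X x i i * t) ^ 2
      else if (v.1.2 : ℕ) + 1 = i then -(X x (v.1.1 : ℕ) i - x v * X x i i)
      else if (v.1.1 : ℕ) = i + 1 then X x i (v.1.2 : ℕ)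
      else 0)
    = (∑ j ∈ Finset.Icc 1 i, (-(X x j i * X x i i) / (1 + X x i i * t) ^ 2) • E n j i)
      + (∑ j ∈ Finset.Icc 1 (i - 1), (-(X x j i - X x j (i - 1) * X x i i)) • E n j (i - 1))
      + (∑ l ∈ Finset.Icc (i + 1) n, (X x i l) • E n (i + 1) l) := by
  funext v
  rw [Pi.add_apply, Pi.add_apply, sum_smul_E_row, sum_smul_E_row, sum_smul_E_col]
  simp only [Finset.mem_Icc]
  obtain ⟨q1, q2, q3⟩ := v.2
  by_cases hbi : (v.1.2 : ℕ) = i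
  · rw [if_pos hbi, if_pos ⟨hbi, by omega⟩, if_neg (by omega), if_neg (by omega)]
    rw [X_self x v, hbi]
    ring
  · by_cases hbi' : (v.1.2 : ℕ) + 1 = i
    · rw [if_neg hbi, if_pos hbi', if_neg (by tauto), if_pos ⟨by omega, by omega⟩,
        if_neg (by omega)]
      rw [X_self x v, show ((v.1.2 : ℕ)) = i - 1 by omega]
      ring
    · by_cases hai : (v.1.1 : ℕ) = i + 1
      · rw [if_neg hbi, if_neg hbi', if_pos hai, if_neg (by tauto), if_neg (by omega),
          if_pos ⟨hai, by omega⟩]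
        ring
      · rw [if_neg hbi, if_neg hbi', if_neg hai, if_neg (by tauto), if_neg (by omega),
          if_neg (by tauto)]
        ring

lemma uderiv (h1 : 1 ≤ i) (h2 : i ≤ n) {ψ : (TriIdx n → ℝ) → ℝ}
    (hψ : ContDiff ℝ (⊤ : ℕ∞) ψ) (x : TriIdx n → ℝ) {t : ℝ}
    (hD : 0 < 1 + X x i i * t) (μ : ℝ) :
    HasDerivAt (fun s => (1 + X x i i * s) ^ (-μ) * ψ (Phi i h1 h2 s x))
      ((-μ * (1 + X x i i * t) ^ (-μ - 1) * X x i i) * ψ (Phi i h1 h2 t x)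
        + (1 + X x i i * t) ^ (-μ) *
          ((∑ j ∈ Finset.Icc 1 i,
              (-(X x j i * X x i i) / (1 + X x i i * t) ^ 2) * P ψ (Phi i h1 h2 t x) j i)
            + (∑ j ∈ Finset.Icc 1 (i - 1),
                (-(X x j i - X x j (i - 1) * X x i i)) * P ψ (Phi i h1 h2 t x) j (i - 1))
            + (∑ l ∈ Finset.Icc (i + 1) n,
                (X x i l) * P ψ (Phi i h1 h2 t x) (i + 1) l))) t := by
  set y := Phi i h1 h2 t x with hy
  have hcomp : HasDerivAt (fun s => ψ (Phi i h1 h2 s x))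
      (fderiv ℝ ψ y (fun v : TriIdx n =>
        if (v.1.2 : ℕ) = i then -(x v * X x i i) / (1 + X x i i * t) ^ 2
        else if (v.1.2 : ℕ) + 1 = i then -(X x (v.1.1 : ℕ) i - x v * X x i i)
        else if (v.1.1 : ℕ) = i + 1 then X x i (v.1.2 : ℕ)
        else 0)) t := by
    exact chain hψ (fun v => Phi_coord_hasDerivAt h1 h2 x hD v)
  rw [dA_sum h1 h2 x t, map_add, map_add, map_sum, map_sum, map_sum] at hcomp
  simp only [map_smul, smul_eq_mul] at hcomp
  have hden : HasDerivAt (fun s : ℝ => 1 + X x i i * s) (X x i i) t := by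
    simpa using (((hasDerivAt_id t).const_mul (X x i i)).const_add 1)
  have hpre : HasDerivAt (fun s => (1 + X x i i * s) ^ (-μ))
      (-μ * (1 + X x i i * t) ^ (-μ - 1) * X x i i) t := by
    have h := (Real.hasDerivAt_rpow_const (x := 1 + X x i i * t) (p := -μ)
      (Or.inl hD.ne')).comp t hden
    exact h
  have := hpre.mul hcomp
  exact this


lemma mk'_c1 {a b : ℕ} {p1 p2 p3} : (((mk' a b p1 p2 p3 : TriIdx n).1.1 : ℕ)) = a := by simp [mk']
lemma mk'_c2 {a b : ℕ} {p1 p2 p3} : (((mk' a b p1 p2 p3 : TriIdx n).1.2 : ℕ)) = b := by simp [mk']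

lemma pdut_col_im1 (h1 : 1 ≤ i) (h2 : i ≤ n) {ψ : (TriIdx n → ℝ) → ℝ}
    (hψ : ContDiff ℝ (⊤ : ℕ∞) ψ) (x : TriIdx n → ℝ) {t : ℝ}
    (hD : 0 < 1 + X x i i * t) (μ : ℝ)
    (j : ℕ) (p1 : 1 ≤ j) (p2 : j ≤ i - 1) (p3 : i - 1 ≤ n) :
    pd (fun x' => (1 + X x' i i * t) ^ (-μ) * ψ (Phi i h1 h2 t x')) (mk' j (i-1) p1 p2 p3) x
      = (1 + X x i i * t) ^ (-μ) *
          ((1 + X x i i * t) * P ψ (Phi i h1 h2 t x) j (i-1)) := by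
  set w : TriIdx n := mk' j (i-1) p1 p2 p3 with hw
  have hii : ¬((w.1.1 : ℕ) = i ∧ (w.1.2 : ℕ) = i) := by
    rw [hw]; simp only [mk'_c1, mk'_c2]; omega
  have hg : ∀ v : TriIdx n, HasDerivAt (fun σ => Phi i h1 h2 t (Function.update x w σ) v)
      (((1 + X x i i * t) • E n j (i-1)) v) (x w) := by
    intro v
    have hv := v.2
    simp only [Phi_apply, X_update, upd_apply, Pi.smul_apply, E_apply, smul_eq_mul,
      hw, mk'_c1, mk'_c2, eq_self_iff_true, and_true, true_and, if_true,
      not_true, false_and, and_false, if_false]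
    split_ifs <;>
      first
        | (exfalso; omega)
        | exact (hasDerivAt_const (x w) _).congr_deriv (by ring1)
        | exact ((((hasDerivAt_const (x w) (X x ((v.1.1 : ℕ)) i)).sub
            ((hasDerivAt_id (x w)).mul_const (X x i i))).neg.mul_const t).add
            (hasDerivAt_id (x w))).congr_deriv (by ring1)
  have hchain := chain hψ hg
  rw [Function.update_eq_self] at hchain
  have hfun : (fun σ => (fun x' => (1 + X x' i i * t) ^ (-μ) * ψ (Phi i h1 h2 t x'))
      (Function.update x w σ))
      = fun σ => (1 + X x i i * t) ^ (-μ) * ψ (Phi i h1 h2 t (Function.update x w σ)) := by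
    funext σ
    simp only
    rw [X_update, if_neg hii]
  rw [pd, hfun, (hchain.const_mul ((1 + X x i i * t) ^ (-μ))).deriv]
  rw [map_smul, smul_eq_mul]
  rfl


lemma pdut_col_i_lt (h1 : 1 ≤ i) (h2 : i ≤ n) {ψ : (TriIdx n → ℝ) → ℝ}
    (hψ : ContDiff ℝ (⊤ : ℕ∞) ψ) (x : TriIdx n → ℝ) {t : ℝ}
    (hD : 0 < 1 + X x i i * t) (μ : ℝ)
    (j : ℕ) (p1 : 1 ≤ j) (p2 : j ≤ i) (p3 : i ≤ n) (hj : j < i) :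
    pd (fun x' => (1 + X x' i i * t) ^ (-μ) * ψ (Phi i h1 h2 t x')) (mk' j i p1 p2 p3) x
      = (1 + X x i i * t) ^ (-μ) *
          ((1 / (1 + X x i i * t)) * P ψ (Phi i h1 h2 t x) j i
            - t * P ψ (Phi i h1 h2 t x) j (i-1)) := by
  set w : TriIdx n := mk' j i p1 p2 p3 with hw
  have hii : ¬((w.1.1 : ℕ) = i ∧ (w.1.2 : ℕ) = i) := by
    rw [hw]; simp only [mk'_c1, mk'_c2]; omega
  have hg : ∀ v : TriIdx n, HasDerivAt (fun σ => Phi i h1 h2 t (Function.update x w σ) v)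
      (((1 / (1 + X x i i * t)) • E n j i + (-t) • E n j (i-1)) v) (x w) := by
    intro v
    have hv := v.2
    simp only [Phi_apply, X_update, upd_apply, Pi.add_apply, Pi.smul_apply, E_apply,
      smul_eq_mul, hw, mk'_c1, mk'_c2, eq_self_iff_true, and_true, true_and, if_true,
      not_true, false_and, and_false, if_false]
    split_ifs <;>
      first
        | (exfalso; omega)
        | exact (hasDerivAt_const (x w) _).congr_deriv (by ring1)
        | exact ((hasDerivAt_id (x w)).div_const (1 + X x i i * t)).congr_deriv (by ring1)
        | exact ((((hasDerivAt_id (x w)).sub_const (x v * X x i i)).neg.mul_const t).add_const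
            (x v)).congr_deriv (by ring1)
  have hchain := chain hψ hg
  rw [Function.update_eq_self] at hchain
  have hfun : (fun σ => (fun x' => (1 + X x' i i * t) ^ (-μ) * ψ (Phi i h1 h2 t x'))
      (Function.update x w σ))
      = fun σ => (1 + X x i i * t) ^ (-μ) * ψ (Phi i h1 h2 t (Function.update x w σ)) := by
    funext σ
    simp only
    rw [X_update, if_neg hii]
  rw [pd, hfun, (hchain.const_mul ((1 + X x i i * t) ^ (-μ))).deriv]
  rw [map_add, map_smul, map_smul, smul_eq_mul, smul_eq_mul]
  rw [P, P]
  ring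

lemma pdut_row_ip1 (h1 : 1 ≤ i) (h2 : i ≤ n) {ψ : (TriIdx n → ℝ) → ℝ}
    (hψ : ContDiff ℝ (⊤ : ℕ∞) ψ) (x : TriIdx n → ℝ) {t : ℝ}
    (hD : 0 < 1 + X x i i * t) (μ : ℝ)
    (l : ℕ) (p1 : 1 ≤ i + 1) (p2 : i + 1 ≤ l) (p3 : l ≤ n) :
    pd (fun x' => (1 + X x' i i * t) ^ (-μ) * ψ (Phi i h1 h2 t x')) (mk' (i+1) l p1 p2 p3) x
      = (1 + X x i i * t) ^ (-μ) * P ψ (Phi i h1 h2 t x) (i+1) l := by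
  set w : TriIdx n := mk' (i+1) l p1 p2 p3 with hw
  have hii : ¬((w.1.1 : ℕ) = i ∧ (w.1.2 : ℕ) = i) := by
    rw [hw]; simp only [mk'_c1, mk'_c2]; omega
  have hg : ∀ v : TriIdx n, HasDerivAt (fun σ => Phi i h1 h2 t (Function.update x w σ) v)
      ((E n (i+1) l) v) (x w) := by
    intro v
    have hv := v.2
    simp only [Phi_apply, X_update, upd_apply, E_apply, hw, mk'_c1, mk'_c2,
      eq_self_iff_true, and_true, true_and, if_true, not_true, false_and, and_false, if_false]
    split_ifs <;>
      first
        | (exfalso; omega)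
        | exact (hasDerivAt_const (x w) _).congr_deriv (by ring1)
        | exact ((hasDerivAt_id (x w)).const_add (X x i ((v.1.2 : ℕ)) * t)).congr_deriv
            (by ring)
  have hchain := chain hψ hg
  rw [Function.update_eq_self] at hchain
  have hfun : (fun σ => (fun x' => (1 + X x' i i * t) ^ (-μ) * ψ (Phi i h1 h2 t x'))
      (Function.update x w σ))
      = fun σ => (1 + X x i i * t) ^ (-μ) * ψ (Phi i h1 h2 t (Function.update x w σ)) := by
    funext σ
    simp only
    rw [X_update, if_neg hii]
  rw [pd, hfun, (hchain.const_mul ((1 + X x i i * t) ^ (-μ))).deriv]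
  rfl

lemma pdut_ii (h1 : 1 ≤ i) (h2 : i ≤ n) {ψ : (TriIdx n → ℝ) → ℝ}
    (hψ : ContDiff ℝ (⊤ : ℕ∞) ψ) (x : TriIdx n → ℝ) {t : ℝ}
    (hD : 0 < 1 + X x i i * t) (μ : ℝ) (p1 : 1 ≤ i) (p2 : i ≤ i) (p3 : i ≤ n) :
    pd (fun x' => (1 + X x' i i * t) ^ (-μ) * ψ (Phi i h1 h2 t x')) (mk' i i p1 p2 p3) x
      = (-μ * (1 + X x i i * t) ^ (-μ - 1) * t) * ψ (Phi i h1 h2 t x)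
        + (1 + X x i i * t) ^ (-μ) *
          ((1 / (1 + X x i i * t) ^ 2) * P ψ (Phi i h1 h2 t x) i i
            + (∑ k ∈ Finset.Icc 1 (i-1),
                (-(X x k i * t) / (1 + X x i i * t) ^ 2) * P ψ (Phi i h1 h2 t x) k i)
            + (∑ k ∈ Finset.Icc 1 (i-1),
                (X x k (i-1) * t) * P ψ (Phi i h1 h2 t x) k (i-1))) := by
  set w : TriIdx n := mk' i i p1 p2 p3 with hw
  have hxw : x w = X x i i := X_eq x i i p1 p2 p3
  have hne : (1 : ℝ) + x w * t ≠ 0 := by rw [hxw]; exact hD.ne'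
  have hg : ∀ v : TriIdx n, HasDerivAt (fun σ => Phi i h1 h2 t (Function.update x w σ) v)
      (if (v.1.2 : ℕ) = i then
        (if (v.1.1 : ℕ) = i then 1 / (1 + X x i i * t) ^ 2
         else -(x v * t) / (1 + X x i i * t) ^ 2)
       else if (v.1.2 : ℕ) + 1 = i then x v * t
       else 0) (x w) := by
    intro v
    have hv := v.2
    simp only [Phi_apply, X_update, upd_apply, hw, mk'_c1, mk'_c2,
      eq_self_iff_true, and_true, true_and, if_true, not_true, false_and, and_false, if_false]
    split_ifs <;>
      first
        | (exfalso; omega)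
        | exact (hasDerivAt_const (x w) _).congr_deriv (by ring1)
        | exact ((hasDerivAt_id (x w)).div
            (((hasDerivAt_id (x w)).mul_const t).const_add 1) hne).congr_deriv
            (by simp only [id_eq, hxw]; ring1)
        | exact ((hasDerivAt_const (x w) (x v)).div
            (((hasDerivAt_id (x w)).mul_const t).const_add 1) hne).congr_deriv
            (by simp only [id_eq, hxw]; ring1)
        | exact HasDerivAt.congr_deriv
            ((((hasDerivAt_const (x w) (X x ((v.1.1 : ℕ)) i)).sub
              ((hasDerivAt_id (x w)).const_mul (x v))).neg.mul_const t).add_const (x v))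
            (by ring1)
  have hsum : (fun v : TriIdx n =>
      (if (v.1.2 : ℕ) = i then
        (if (v.1.1 : ℕ) = i then 1 / (1 + X x i i * t) ^ 2
         else -(x v * t) / (1 + X x i i * t) ^ 2)
       else if (v.1.2 : ℕ) + 1 = i then x v * t
       else 0))
      = (1 / (1 + X x i i * t) ^ 2) • E n i i
        + (∑ k ∈ Finset.Icc 1 (i-1), (-(X x k i * t) / (1 + X x i i * t) ^ 2) • E n k i)
        + (∑ k ∈ Finset.Icc 1 (i-1), (X x k (i-1) * t) • E n k (i-1)) := by
    funext v
    rw [Pi.add_apply, Pi.add_apply, Pi.smul_apply, E_apply, sum_smul_E_row, sum_smul_E_row]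
    simp only [Finset.mem_Icc, smul_eq_mul]
    obtain ⟨q1, q2, q3⟩ := v.2
    by_cases hbi : (v.1.2 : ℕ) = i
    · rw [if_pos hbi]
      by_cases hai : (v.1.1 : ℕ) = i
      · rw [if_pos hai, if_pos ⟨hai, hbi⟩, if_neg (by omega), if_neg (by omega)]
        ring
      · rw [if_neg hai, if_neg (by tauto), if_pos ⟨hbi, by omega⟩, if_neg (by omega)]
        rw [X_self x v, hbi]
        ring
    · by_cases hbi' : (v.1.2 : ℕ) + 1 = i
      · rw [if_neg hbi, if_pos hbi', if_neg (by tauto), if_neg (by omega),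
          if_pos ⟨by omega, by omega⟩]
        rw [X_self x v, show ((v.1.2 : ℕ)) = i - 1 by omega]
        ring
      · rw [if_neg hbi, if_neg hbi', if_neg (by tauto), if_neg (by omega), if_neg (by omega)]
        ring
  have hchain := chain hψ (fun v => (hg v).congr_deriv (congrFun hsum v))
  rw [Function.update_eq_self] at hchain
  have hfun : (fun σ => (fun x' => (1 + X x' i i * t) ^ (-μ) * ψ (Phi i h1 h2 t x'))
      (Function.update x w σ))
      = fun σ => (1 + σ * t) ^ (-μ) * ψ (Phi i h1 h2 t (Function.update x w σ)) := by
    funext σ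
    simp only
    rw [X_update, if_pos ⟨rfl, rfl⟩]
  have hden : HasDerivAt (fun σ : ℝ => 1 + σ * t) (1 * t) (x w) :=
    ((hasDerivAt_id (x w)).mul_const t).const_add 1
  have hpre : HasDerivAt (fun σ : ℝ => (1 + σ * t) ^ (-μ))
      (-μ * (1 + X x i i * t) ^ (-μ - 1) * t) (x w) := by
    have h := (Real.hasDerivAt_rpow_const (x := 1 + x w * t) (p := -μ)
      (Or.inl hne)).comp (x w) hden
    exact h.congr_deriv (by rw [hxw]; ring)
  rw [pd, hfun, (hpre.fun_mul hchain).deriv, Function.update_eq_self, hxw]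
  rw [map_add, map_add, map_smul, map_sum, map_sum]
  simp only [map_smul, smul_eq_mul, P]


lemma pdut_col (h1 : 1 ≤ i) (h2 : i ≤ n) {ψ : (TriIdx n → ℝ) → ℝ}
    (hψ : ContDiff ℝ (⊤ : ℕ∞) ψ) (x : TriIdx n → ℝ) {t : ℝ}
    (hD : 0 < 1 + X x i i * t) (μ : ℝ)
    (j : ℕ) (p1 : 1 ≤ j) (p2 : j ≤ i) (p3 : i ≤ n) :
    pd (fun x' => (1 + X x' i i * t) ^ (-μ) * ψ (Phi i h1 h2 t x')) (mk' j i p1 p2 p3) x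
      = if j = i then
          (-μ * (1 + X x i i * t) ^ (-μ - 1) * t) * ψ (Phi i h1 h2 t x)
            + (1 + X x i i * t) ^ (-μ) *
              ((1 / (1 + X x i i * t) ^ 2) * P ψ (Phi i h1 h2 t x) i i
                + (∑ k ∈ Finset.Icc 1 (i-1),
                    (-(X x k i * t) / (1 + X x i i * t) ^ 2) * P ψ (Phi i h1 h2 t x) k i)
                + (∑ k ∈ Finset.Icc 1 (i-1),
                    (X x k (i-1) * t) * P ψ (Phi i h1 h2 t x) k (i-1)))
        else (1 + X x i i * t) ^ (-μ) *
          ((1 / (1 + X x i i * t)) * P ψ (Phi i h1 h2 t x) j i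
            - t * P ψ (Phi i h1 h2 t x) j (i-1)) := by
  rcases eq_or_ne j i with rfl | hne
  · rw [if_pos rfl]
    exact pdut_ii h1 h2 hψ x hD μ p1 p2 p3
  · rw [if_neg hne]
    exact pdut_col_i_lt h1 h2 hψ x hD μ j p1 p2 p3 (lt_of_le_of_ne p2 hne)

lemma Icc_split (h1 : 1 ≤ i) : Finset.Icc 1 i = insert i (Finset.Icc 1 (i-1)) := by
  ext a
  simp only [Finset.mem_Icc, Finset.mem_insert]
  omega

lemma not_mem_Icc_pred : i ∉ Finset.Icc 1 (i-1) := by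
  simp only [Finset.mem_Icc]
  omega

end Main
end Aux

open Aux


/-- `u(t,x) = (1+x_{ii}t)^{−μ} ψ(Φ^i_t(x))` satisfies `u(0,·) = ψ` and
`∂u/∂t = −F_i^{(μ)} u(t,·)` on `{1 + x_{ii}t > 0}` (that is, `u(t,·) = exp(−tF_i^{(μ)})ψ`);
moreover `v(t,x) = ψ(Φ⁰_t(x))` satisfies `v(0,·) = ψ` and `∂v/∂t = −F_0 v` where
`F_0 = −z^{−1}∂/∂x_{1n}`. -/
theorem stmt4 (n i : ℕ) (hn : 1 ≤ n) (h1 : 1 ≤ i) (h2 : i ≤ n) (μ : ℝ)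
    (ψ : (TriIdx n → ℝ) → ℝ) (hψ : ContDiff ℝ (⊤ : ℕ∞) ψ)
    (u : ℝ → (TriIdx n → ℝ) → ℝ)
    (hu : ∀ t x, u t x =
      (1 + x (mk' i i h1 le_rfl h2) * t) ^ (-μ) * ψ (Phi i h1 h2 t x))
    (z : ℝ) (hz : z ≠ 0)
    (v : ℝ → (TriIdx n → ℝ) → ℝ)
    (hv : ∀ t x, v t x = ψ (Phi0 hn z t x)) :
    (∀ x, u 0 x = ψ x) ∧
    (∀ t (x : TriIdx n → ℝ), 0 < 1 + x (mk' i i h1 le_rfl h2) * t →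
      HasDerivAt (fun s => u s x) (-(Fop n i h1 h2 μ (u t) x)) t) ∧
    (∀ x, v 0 x = ψ x) ∧
    (∀ t (x : TriIdx n → ℝ),
      HasDerivAt (fun s => v s x) (z⁻¹ * pd (v t) (mk' 1 n le_rfl hn le_rfl) x) t) := by
  refine ⟨?_, ?_, ?_, ?_⟩
  · -- part 1
    intro x
    rw [hu, Phi_zero]
    simp [Real.rpow_natCast, mul_zero, add_zero, Real.one_rpow]
  · -- part 2
    intro t x hDx
    rw [X_eq x i i h1 le_rfl h2] at hDx
    have hx : (fun s => u s x) = fun s => (1 + X x i i * s) ^ (-μ) * ψ (Phi i h1 h2 s x) := by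
      funext s; rw [hu, X_eq x i i h1 le_rfl h2]
    rw [hx]
    refine (uderiv h1 h2 hψ x hDx μ).congr_deriv ?_
    have hut : u t = fun x' => (1 + X x' i i * t) ^ (-μ) * ψ (Phi i h1 h2 t x') := by
      funext x'; rw [hu, X_eq x' i i h1 le_rfl h2]
    rw [hut, Fop]
    simp only [X_eq x, pdut_col h1 h2 hψ x hDx μ, pdut_col_im1 h1 h2 hψ x hDx μ,
      pdut_row_ip1 h1 h2 hψ x hDx μ]
    have Ha := Finset.sum_attach (Finset.Icc 1 i) (fun j => X x j i * (if j = i then (-μ * (1 + X x i i * t) ^ (-μ - 1) * t * ψ (Phi i h1 h2 t x) + (1 + X x i i * t) ^ (-μ) * (1 / (1 + X x i i * t) ^ 2 * P ψ (Phi i h1 h2 t x) i i + (∑ k ∈ Finset.Icc 1 (i - 1), -(X x k i * t) / (1 + X x i i * t) ^ 2 * P ψ (Phi i h1 h2 t x) k i) + ∑ k ∈ Finset.Icc 1 (i - 1), X x k (i - 1) * t * P ψ (Phi i h1 h2 t x) k (i - 1))) else ((1 + X x i i * t) ^ (-μ) * (1 / (1 + X x i i * t) * P ψ (Phi i h1 h2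 t x) j i - t * P ψ (Phi i h1 h2 t x) j (i - 1)))))
    have Hb := Finset.sum_attach (Finset.Icc 1 (i - 1)) (fun j => X x j (i - 1) * ((1 + X x i i * t) ^ (-μ) * ((1 + X x i i * t) * P ψ (Phi i h1 h2 t x) j (i - 1))))
    have Hc := Finset.sum_attach (Finset.Icc (i + 1) n) (fun l => X x i l * ((1 + X x i i * t) ^ (-μ) * P ψ (Phi i h1 h2 t x) (i + 1) l))
    have Hd := Finset.sum_attach (Finset.Icc 1 (i - 1)) (fun j => X x j i * ((1 + X x i i * t) ^ (-μ) * ((1 + X x i i * t) * P ψ (Phi i h1 h2 t x) j (i - 1))))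
    rw [Ha, Hb, Hc, Hd]
    rw [Icc_split h1, Finset.sum_insert not_mem_Icc_pred, Finset.sum_insert not_mem_Icc_pred]
    rw [if_pos (rfl : i = i)]
    have eA1 : (∑ j ∈ Finset.Icc 1 (i - 1), -(X x j i * X x i i) / (1 + X x i i * t) ^ 2 * P ψ (Phi i h1 h2 t x) j i)
        = -(X x i i) / (1 + X x i i * t) ^ 2 * (∑ j ∈ Finset.Icc 1 (i - 1), X x j i * P ψ (Phi i h1 h2 t x) j i) := by
      rw [Finset.mul_sum]
      exact Finset.sum_congr rfl fun j hj => by ring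
    have eA2 : (∑ j ∈ Finset.Icc 1 (i - 1), -(X x j i - X x j (i - 1) * X x i i) * P ψ (Phi i h1 h2 t x) j (i - 1))
        = -(∑ j ∈ Finset.Icc 1 (i - 1), X x j i * P ψ (Phi i h1 h2 t x) j (i - 1)) + X x i i * (∑ j ∈ Finset.Icc 1 (i - 1), X x j (i - 1) * P ψ (Phi i h1 h2 t x) j (i - 1)) := by
      rw [Finset.mul_sum, ← Finset.sum_neg_distrib, ← Finset.sum_add_distrib]
      exact Finset.sum_congr rfl fun j hj => by ring
    have eIf : (∑ j ∈ Finset.Icc 1 (i - 1), X x j i * (if j = i then (-μ * (1 + X x i i * t) ^ (-μ - 1) * t * ψ (Phi i h1 h2 t x) + (1 + X x i i * t) ^ (-μ) * (1 / (1 + X x i i * t) ^ 2 * P ψ (Phi i h1 h2 t x) i i + (∑ k ∈ Finset.Icc 1 (i - 1), -(X x k i * t) / (1 + X x i i * t) ^ 2 * P ψ (Phi i h1 h2 t x) k i) + ∑ k ∈ Finset.Icc 1 (i - 1), X x k (i - 1) * t * P ψ (Phi i h1 h2 t x) k (i - 1))) else ((1 + X x i i * t) ^ (-μ) * (1 / (1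 + X x i i * t) * P ψ (Phi i h1 h2 t x) j i - t * P ψ (Phi i h1 h2 t x) j (i - 1)))))
        = (1 + X x i i * t) ^ (-μ) * (1 / (1 + X x i i * t)) * (∑ j ∈ Finset.Icc 1 (i - 1), X x j i * P ψ (Phi i h1 h2 t x) j i) - (1 + X x i i * t) ^ (-μ) * t * (∑ j ∈ Finset.Icc 1 (i - 1), X x j i * P ψ (Phi i h1 h2 t x) j (i - 1)) := by
      rw [Finset.mul_sum, Finset.mul_sum, ← Finset.sum_sub_distrib]
      refine Finset.sum_congr rfl fun j hj => ?_
      rw [if_neg (by have := Finset.mem_Icc.mp hj; omega)]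
      ring
    have g1 : (∑ k ∈ Finset.Icc 1 (i - 1), -(X x k i * t) / (1 + X x i i * t) ^ 2 * P ψ (Phi i h1 h2 t x) k i)
        = -t / (1 + X x i i * t) ^ 2 * (∑ j ∈ Finset.Icc 1 (i - 1), X x j i * P ψ (Phi i h1 h2 t x) j i) := by
      rw [Finset.mul_sum]
      exact Finset.sum_congr rfl fun j hj => by ring
    have g2 : (∑ k ∈ Finset.Icc 1 (i - 1), X x k (i - 1) * t * P ψ (Phi i h1 h2 t x) k (i - 1))
        = t * (∑ j ∈ Finset.Icc 1 (i - 1), X x j (i - 1) * P ψ (Phi i h1 h2 t x) j (i - 1)) := by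
      rw [Finset.mul_sum]
      exact Finset.sum_congr rfl fun j hj => by ring
    have f2 : (∑ j ∈ Finset.Icc 1 (i - 1), X x j (i - 1) * ((1 + X x i i * t) ^ (-μ) * ((1 + X x i i * t) * P ψ (Phi i h1 h2 t x) j (i - 1))))
        = (1 + X x i i * t) ^ (-μ) * (1 + X x i i * t) * (∑ j ∈ Finset.Icc 1 (i - 1), X x j (i - 1) * P ψ (Phi i h1 h2 t x) j (i - 1)) := by
      rw [Finset.mul_sum]
      exact Finset.sum_congr rfl fun j hj => by ring
    have f3 : (∑ l ∈ Finset.Icc (i + 1) n, X x i l * ((1 + X x i i * t) ^ (-μ) * P ψ (Phi i h1 h2 t x) (i + 1) l))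
        = (1 + X x i i * t) ^ (-μ) * (∑ l ∈ Finset.Icc (i + 1) n, X x i l * P ψ (Phi i h1 h2 t x) (i + 1) l) := by
      rw [Finset.mul_sum]
      exact Finset.sum_congr rfl fun j hj => by ring
    have f4 : (∑ j ∈ Finset.Icc 1 (i - 1), X x j i * ((1 + X x i i * t) ^ (-μ) * ((1 + X x i i * t) * P ψ (Phi i h1 h2 t x) j (i - 1))))
        = (1 + X x i i * t) ^ (-μ) * (1 + X x i i * t) * (∑ j ∈ Finset.Icc 1 (i - 1), X x j i * P ψ (Phi i h1 h2 t x) j (i - 1)) := by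
      rw [Finset.mul_sum]
      exact Finset.sum_congr rfl fun j hj => by ring
    rw [eA1, eA2, eIf, g1, g2, f2, f3, f4]
    have hpow : (1 + X x i i * t) ^ (-μ - 1)
        = (1 + X x i i * t) ^ (-μ) / (1 + X x i i * t) := by
      rw [Real.rpow_sub hDx, Real.rpow_one]
    rw [hpow]
    have hne : (1 + X x i i * t) ≠ 0 := ne_of_gt hDx
    field_simp
    ring
  · -- part 3
    intro x
    rw [hv, Phi0]
    simp [Function.update_eq_self]
  · -- part 4
    intro t x
    set w : TriIdx n := mk' 1 n le_rfl hn le_rfl with hw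
    have hvs : (fun s => v s x) = fun s => ψ (Function.update x w (x w + s / z)) := by
      funext s; rw [hv, Phi0]
    have hg : ∀ v' : TriIdx n,
        HasDerivAt (fun s => Function.update x w (x w + s / z) v')
          ((z⁻¹ • (Pi.single w (1:ℝ) : TriIdx n → ℝ)) v') t := by
      intro v'
      simp only [Function.update_apply, Pi.smul_apply, Pi.single_apply, smul_eq_mul]
      split_ifs with h
      · exact (((hasDerivAt_id t).div_const z).const_add (x w)).congr_deriv (by ring)
      · exact (hasDerivAt_const t (x v')).congr_deriv (by ring1)
    have hchain := chain hψ hg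
    rw [hvs]
    refine hchain.congr_deriv ?_
    rw [map_smul, smul_eq_mul]
    congr 1
    have hvt : v t = fun x' => ψ (Phi0 hn z t x') := by funext x'; rw [hv]
    rw [hvt, pd]
    have hfun : (fun σ => (fun x' => ψ (Phi0 hn z t x')) (Function.update x w σ))
        = fun σ => ψ (Function.update x w (σ + t / z)) := by
      funext σ
      show ψ (Phi0 hn z t (Function.update x w σ)) = _
      rw [Phi0, Function.update_idem, Function.update_self]
    have hg2 : ∀ v' : TriIdx n,
        HasDerivAt (fun σ => Function.update x w (σ + t / z) v')
          ((Pi.single w 1 : TriIdx n → ℝ) v') (x w) := by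
      intro v'
      simp only [Function.update_apply, Pi.single_apply]
      split_ifs with h
      · exact ((hasDerivAt_id (x w)).add_const (t / z)).congr_deriv (by ring)
      · exact hasDerivAt_const (x w) (x v')
    have hchain2 := chain hψ hg2
    rw [hfun, hchain2.deriv]
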